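/- Let $\bar\Phi \in L^2(0,T;\mathbb{R}^n)$, $\bar{u} \in \mathcal{U}_{\rm ad}$, and suppose $v \in C(\bar u)$ (the critical cone). For each positive integer $k$ define $v_{k,i}(t) = 0$ if $u_i^{\min}(t) < \bar u_i(t) < u_i^{\min}(t) + 1/k$ or $u_i^{\max}(t) - 1/k < \bar u_i(t) < u_i^{\max}(t)$, and $v_{k,i}(t) = \mathbb{P}_{[-k,k]}(v_i(t))$ otherwise. Then: (i) $\bar u + k^{-2} v_k \in \mathcal{U}_{\rm ad}$ for every $k$; (ii) $v_k \to v$ strongly in $L^2(0,T;\mathbb{R}^n)$; (iii) $|v_{k,i}(t)| \le |v_i(t)|$ a.e. for each $i$, so $\sum_i \int_0^T \bar\Phi_i v_{k,i}\,dt = 0$ whenever $\sum_i \int_0^T |\bar\Phi_i v_i|\,dt = 0$. In particular, $C(\bar u)$ equals the $L^2$-closure of $D(\bar u) = \{v \in S(\bar u) : \sum_i\int_0^T \bar\Phi_i v_i\,dt = 0\}$. -/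

import Mathlib

open MeasureTheory Filter

/-- The admissible set `U_ad = {u : umin ≤ u ≤ umax a.e.}` (measurable representatives). -/
def Uad (n : ℕ) (T : ℝ) (umin umax : ℝ → Fin n → ℝ) (u : ℝ → Fin n → ℝ) : Prop :=
  Measurable u ∧
    ∀ᵐ t ∂(volume.restrict (Set.Ioo 0 T)), ∀ i, umin t i ≤ u t i ∧ u t i ≤ umax t i

/-- The cone of feasible directions `S(ū) = {λ(u - ū) : λ > 0, u ∈ U_ad}`. -/
def feasCone (n : ℕ) (T : ℝ) (umin umax ubar : ℝ → Fin n → ℝ) (v : ℝ → Fin n → ℝ) : Prop :=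
  ∃ lam : ℝ, 0 < lam ∧ ∃ u : ℝ → Fin n → ℝ, Uad n T umin umax u ∧
    ∀ᵐ t ∂(volume.restrict (Set.Ioo 0 T)), ∀ i, v t i = lam * (u t i - ubar t i)

/-- `D(ū) = {v ∈ S(ū) : ∑ᵢ ∫ Φᵢ vᵢ dt = 0}`. -/
def Dcone (n : ℕ) (T : ℝ) (umin umax ubar Φ : ℝ → Fin n → ℝ) (v : ℝ → Fin n → ℝ) : Prop :=
  feasCone n T umin umax ubar v ∧ ∑ i, ∫ t in Set.Ioo 0 T, Φ t i * v t i = 0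

/-- Membership in the `L²`-closure of `S(ū)`, sequentially. -/
def inClosureS (n : ℕ) (T : ℝ) (umin umax ubar : ℝ → Fin n → ℝ)
    (v : ℝ → Fin n → ℝ) : Prop :=
  ∃ vk : ℕ → ℝ → Fin n → ℝ, (∀ k, feasCone n T umin umax ubar (vk k)) ∧
    Tendsto (fun k => ∫ t in Set.Ioo 0 T, ∑ i, (vk k t i - v t i) ^ 2) atTop (nhds 0)

/-- Membership in the `L²`-closure of `D(ū)`, sequentially. -/
def inClosureD (n : ℕ) (T : ℝ) (umin umax ubar Φ : ℝ → Fin n → ℝ)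
    (v : ℝ → Fin n → ℝ) : Prop :=
  ∃ vk : ℕ → ℝ → Fin n → ℝ, (∀ k, Dcone n T umin umax ubar Φ (vk k)) ∧
    Tendsto (fun k => ∫ t in Set.Ioo 0 T, ∑ i, (vk k t i - v t i) ^ 2) atTop (nhds 0)

/-- The critical cone `C(ū) = cl_{L²}(S(ū)) ∩ {v : ∑ᵢ ∫ Φᵢ vᵢ = 0}`. -/
def critCone (n : ℕ) (T : ℝ) (umin umax ubar Φ : ℝ → Fin n → ℝ)
    (v : ℝ → Fin n → ℝ) : Prop :=
  inClosureS n T umin umax ubar v ∧ ∑ i, ∫ t in Set.Ioo 0 T, Φ t i * v t i = 0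

/-- The truncation `v_k` used in the critical cone arguments. -/
noncomputable def trunc (n : ℕ) (umin umax ubar v : ℝ → Fin n → ℝ) (k : ℕ)
    (t : ℝ) (i : Fin n) : ℝ :=
  if (umin t i < ubar t i ∧ ubar t i < umin t i + 1 / (k : ℝ)) ∨
      (umax t i - 1 / (k : ℝ) < ubar t i ∧ ubar t i < umax t i) then 0
  else max (-(k : ℝ)) (min (k : ℝ) (v t i))

section helpers

lemma abs_mul_le_sq (a b : ℝ) : |a * b| ≤ a ^ 2 + b ^ 2 := by
  rw [abs_mul]
  nlinarith [sq_nonneg (|a| - |b|), sq_abs a, sq_abs b, abs_nonneg a, abs_nonneg b]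

lemma young_aux (x y δ : ℝ) (hδ : 0 < δ) : x * y ≤ δ * x ^ 2 + y ^ 2 / (4 * δ) := by
  rw [← sub_nonneg]
  have h : δ * x ^ 2 + y ^ 2 / (4 * δ) - x * y = (2 * δ * x - y) ^ 2 / (4 * δ) := by
    field_simp
    ring
  rw [h]
  positivity

lemma abs_mul_le_sq' (a b δ : ℝ) (hδ : 0 < δ) : |a * b| ≤ δ * a ^ 2 + b ^ 2 / (4 * δ) := by
  rw [abs_mul, ← sq_abs a, ← sq_abs b]
  exact young_aux _ _ _ hδ

lemma sq_sub_le {a b : ℝ} (h : |a| ≤ |b|) : (a - b) ^ 2 ≤ 4 * b ^ 2 := by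
  obtain ⟨h1, h2⟩ := abs_le.mp h
  have hb1 := le_abs_self b
  have hb2 := neg_abs_le b
  nlinarith [mul_nonneg (by linarith : (0:ℝ) ≤ 2 * |b| - (a - b))
      (by linarith : (0:ℝ) ≤ 2 * |b| + (a - b)), sq_abs b]

lemma memL2_mul_integrable {α : Type*} [MeasurableSpace α] {μ : Measure α} {f g : α → ℝ}
    (hf : MemLp f 2 μ) (hg : MemLp g 2 μ) : Integrable (fun t => f t * g t) μ :=
  (hf.integrable_sq.add hg.integrable_sq).mono' (hf.1.mul hg.1)
    (Eventually.of_forall fun t => by rw [Real.norm_eq_abs]; exact abs_mul_le_sq _ _)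

lemma trunc_abs_le (n : ℕ) (umin umax ubar v : ℝ → Fin n → ℝ) (k : ℕ) (t : ℝ) (i : Fin n) :
    |trunc n umin umax ubar v k t i| ≤ |v t i| := by
  have hk : (0:ℝ) ≤ (k:ℝ) := Nat.cast_nonneg k
  have hv1 := le_abs_self (v t i)
  have hv2 := neg_abs_le (v t i)
  have ha := abs_nonneg (v t i)
  unfold trunc
  split
  · simpa using ha
  · rw [abs_le]
    constructor
    · exact le_trans (le_min (by linarith) hv2) (le_max_right _ _)
    · exact max_le (by linarith) ((min_le_right _ _).trans (le_abs_self _))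

lemma trunc_measurable {n : ℕ} {umin umax ubar v : ℝ → Fin n → ℝ}
    (hmin : Measurable umin) (hmax : Measurable umax) (hub : Measurable ubar)
    (hv : Measurable v) (k : ℕ) (i : Fin n) :
    Measurable (fun t => trunc n umin umax ubar v k t i) := by
  have h1 : Measurable fun t => umin t i := (measurable_pi_apply i).comp hmin
  have h2 : Measurable fun t => umax t i := (measurable_pi_apply i).comp hmax
  have h3 : Measurable fun t => ubar t i := (measurable_pi_apply i).comp hub
  have h4 : Measurable fun t => v t i := (measurable_pi_apply i).comp hv
  unfold trunc
  refine Measurable.ite ?_ measurable_const (measurable_const.max (measurable_const.min h4))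
  have e : {t : ℝ | (umin t i < ubar t i ∧ ubar t i < umin t i + 1 / (k : ℝ)) ∨
      (umax t i - 1 / (k : ℝ) < ubar t i ∧ ubar t i < umax t i)}
      = ({t | umin t i < ubar t i} ∩ {t | ubar t i < umin t i + 1 / (k : ℝ)}) ∪
        ({t | umax t i - 1 / (k : ℝ) < ubar t i} ∩ {t | ubar t i < umax t i}) := by
    ext t; simp [Set.mem_union, Set.mem_inter_iff]
  rw [e]
  exact ((measurableSet_lt h1 h3).inter (measurableSet_lt h3 (h1.add_const _))).union
    ((measurableSet_lt (h2.sub_const _) h3).inter (measurableSet_lt h3 h2))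

lemma trunc_eventually_eq (n : ℕ) (umin umax ubar v : ℝ → Fin n → ℝ) (t : ℝ) (i : Fin n) :
    ∀ᶠ k : ℕ in atTop, trunc n umin umax ubar v k t i = v t i := by
  have e3 : ∀ᶠ k : ℕ in atTop, |v t i| ≤ (k:ℝ) :=
    (tendsto_natCast_atTop_atTop (R := ℝ)).eventually_ge_atTop _
  have e1 : ∀ᶠ k : ℕ in atTop,
      ¬(umin t i < ubar t i ∧ ubar t i < umin t i + 1 / (k : ℝ)) := by
    by_cases h : umin t i < ubar t i
    · have := tendsto_one_div_atTop_nhds_zero_nat.eventually_lt_const (sub_pos.2 h)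
      exact this.mono fun k hk hc => absurd hc.2 (by linarith)
    · exact Eventually.of_forall fun k hc => h hc.1
  have e2 : ∀ᶠ k : ℕ in atTop,
      ¬(umax t i - 1 / (k : ℝ) < ubar t i ∧ ubar t i < umax t i) := by
    by_cases h : ubar t i < umax t i
    · have := tendsto_one_div_atTop_nhds_zero_nat.eventually_lt_const (sub_pos.2 h)
      exact this.mono fun k hk hc => absurd hc.1 (by linarith)
    · exact Eventually.of_forall fun k hc => h hc.2
  filter_upwards [e1, e2, e3] with k h1 h2 h3
  unfold trunc
  rw [if_neg (by tauto), min_eq_right ((le_abs_self _).trans h3),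
    max_eq_right (by linarith [neg_abs_le (v t i)])]

end helpers
section helpers2

lemma restrict_finite (T : ℝ) : IsFiniteMeasure (volume.restrict (Set.Ioo (0:ℝ) T)) := by
  constructor
  rw [Measure.restrict_apply_univ, Real.volume_Ioo]
  exact ENNReal.ofReal_lt_top

lemma trunc_uad (n : ℕ) (T : ℝ) {umin umax ubar v : ℝ → Fin n → ℝ}
    (hmin : Measurable umin) (hmax : Measurable umax) (hvmeas : Measurable v)
    (hubar : Uad n T umin umax ubar)
    (hsigns : ∀ᵐ t ∂(volume.restrict (Set.Ioo 0 T)), ∀ i,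
      (ubar t i = umin t i → 0 ≤ v t i) ∧ (ubar t i = umax t i → v t i ≤ 0))
    (k : ℕ) (hk : 1 ≤ k) :
    Uad n T umin umax
      (fun t i => ubar t i + ((k : ℝ) ^ 2)⁻¹ * trunc n umin umax ubar v k t i) := by
  constructor
  · exact measurable_pi_lambda _ fun i =>
      ((measurable_pi_apply i).comp hubar.1).add
        (measurable_const.mul (trunc_measurable hmin hmax hubar.1 hvmeas k i))
  · filter_upwards [hubar.2, hsigns] with t h1 h2 i
    obtain ⟨ha, hb⟩ := h1 i
    obtain ⟨hva, hvb⟩ := h2 i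
    have hK : (1:ℝ) ≤ (k:ℝ) := by exact_mod_cast hk
    have hK0 : (0:ℝ) < (k:ℝ) := by linarith
    have hKne : ((k:ℝ)^2) ≠ 0 := by positivity
    have hKinvpos : (0:ℝ) ≤ (((k:ℝ))^2)⁻¹ := by positivity
    have hinv : (((k:ℝ))^2)⁻¹ * (k:ℝ) = 1 / (k:ℝ) := by
      field_simp
    unfold trunc
    split
    case isTrue h => constructor <;> simp <;> linarith
    case isFalse hcond =>
      push_neg at hcond
      obtain ⟨hA, hB⟩ := hcond
      set w := max (-(k:ℝ)) (min (k:ℝ) (v t i)) with hw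
      have hw1 : -(k:ℝ) ≤ w := le_max_left _ _
      have hw2 : w ≤ (k:ℝ) := max_le (by linarith) (min_le_left _ _)
      constructor
      · rcases eq_or_lt_of_le ha with he | hlt
        · have hv0 : 0 ≤ v t i := hva he.symm
          have hw0 : 0 ≤ w := le_trans (le_min hK0.le hv0) (le_max_right _ _)
          nlinarith [mul_nonneg hKinvpos hw0]
        · have h1k := hA hlt
          have hm : (((k:ℝ))^2)⁻¹ * (-(k:ℝ)) ≤ (((k:ℝ))^2)⁻¹ * w :=
            mul_le_mul_of_nonneg_left hw1 hKinvpos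
          have he2 : (((k:ℝ))^2)⁻¹ * (-(k:ℝ)) = -(1/(k:ℝ)) := by
            rw [mul_neg, hinv]
          linarith
      · rcases eq_or_lt_of_le hb with he | hlt
        · have hv0 : v t i ≤ 0 := hvb he
          have hw0 : w ≤ 0 := max_le (by linarith) ((min_le_right _ _).trans hv0)
          nlinarith [mul_nonpos_of_nonneg_of_nonpos hKinvpos hw0]
        · have h1k : ubar t i ≤ umax t i - 1/(k:ℝ) := by
            by_contra hcon
            push_neg at hcon
            exact absurd (hB hcon) (not_le.2 hlt)
          have hm : (((k:ℝ))^2)⁻¹ * w ≤ (((k:ℝ))^2)⁻¹ * (k:ℝ) :=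
            mul_le_mul_of_nonneg_left hw2 hKinvpos
          rw [hinv] at hm
          linarith

lemma trunc_tendsto (n : ℕ) (T : ℝ) {umin umax ubar v : ℝ → Fin n → ℝ}
    (hmin : Measurable umin) (hmax : Measurable umax) (hub : Measurable ubar)
    (hvmeas : Measurable v)
    (hvL2 : ∀ i, MemLp (fun t => v t i) 2 (volume.restrict (Set.Ioo 0 T))) :
    Tendsto (fun k : ℕ =>
        ∫ t in Set.Ioo 0 T, ∑ i, (trunc n umin umax ubar v k t i - v t i) ^ 2)
      atTop (nhds 0) := by
  have h := tendsto_integral_of_dominated_convergence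
      (μ := volume.restrict (Set.Ioo 0 T))
      (F := fun (k : ℕ) t => ∑ i, (trunc n umin umax ubar v k t i - v t i) ^ 2)
      (f := fun _ => 0) (bound := fun t => ∑ i, 4 * (v t i) ^ 2)
      (fun k => (Finset.measurable_sum Finset.univ fun i _ =>
        ((trunc_measurable hmin hmax hub hvmeas k i).sub
          ((measurable_pi_apply i).comp hvmeas)).pow_const 2).aestronglyMeasurable)
      (integrable_finset_sum _ fun i _ => ((hvL2 i).integrable_sq).const_mul 4)
      (fun k => Eventually.of_forall fun t => by
        rw [Real.norm_eq_abs, abs_of_nonneg (Finset.sum_nonneg fun i _ => sq_nonneg _)]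
        exact Finset.sum_le_sum fun i _ => by
          have := sq_sub_le (trunc_abs_le n umin umax ubar v k t i)
          linarith)
      (Eventually.of_forall fun t => by
        have hev : ∀ᶠ k : ℕ in atTop,
            (∑ i, (trunc n umin umax ubar v k t i - v t i) ^ 2) = 0 := by
          have : ∀ᶠ k : ℕ in atTop, ∀ i, trunc n umin umax ubar v k t i = v t i :=
            eventually_all.2 fun i => trunc_eventually_eq n umin umax ubar v t i
          filter_upwards [this] with k hk
          exact Finset.sum_eq_zero fun i _ => by rw [hk i]; ring
        exact Tendsto.congr' (hev.mono fun k hk => hk.symm) tendsto_const_nhds)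
  simpa using h

lemma trunc_orth (n : ℕ) (T : ℝ) (umin umax ubar v Φ : ℝ → Fin n → ℝ) (k : ℕ)
    (hΦv : ∀ᵐ t ∂(volume.restrict (Set.Ioo 0 T)), ∀ i, Φ t i * v t i = 0) :
    ∑ i, ∫ t in Set.Ioo 0 T, Φ t i * trunc n umin umax ubar v k t i = 0 :=
  Finset.sum_eq_zero fun i _ => integral_eq_zero_of_ae (by
    filter_upwards [hΦv] with t h
    rcases mul_eq_zero.mp (h i) with h0 | h0
    · show Φ t i * trunc n umin umax ubar v k t i = 0
      rw [h0, zero_mul]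
    · have htr : trunc n umin umax ubar v k t i = 0 := by
        have := trunc_abs_le n umin umax ubar v k t i
        rw [h0] at this
        simpa using abs_nonpos_iff.mp (by simpa using this)
      show Φ t i * trunc n umin umax ubar v k t i = 0
      rw [htr, mul_zero])

lemma feas_memL2 (n : ℕ) (T : ℝ) (Cbound : ℝ) {umin umax ubar w : ℝ → Fin n → ℝ}
    (hminbdd : ∀ᵐ t ∂(volume.restrict (Set.Ioo 0 T)), ∀ i, |umin t i| ≤ Cbound)
    (hmaxbdd : ∀ᵐ t ∂(volume.restrict (Set.Ioo 0 T)), ∀ i, |umax t i| ≤ Cbound)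
    (hubar : Uad n T umin umax ubar)
    (hw : feasCone n T umin umax ubar w) (i : Fin n) :
    MemLp (fun t => w t i) 2 (volume.restrict (Set.Ioo 0 T)) := by
  haveI := restrict_finite T
  obtain ⟨lam, hlam, u, huad, heq⟩ := hw
  have hmu : Measurable fun t => lam * (u t i - ubar t i) :=
    (measurable_const.mul (((measurable_pi_apply i).comp huad.1).sub
      ((measurable_pi_apply i).comp hubar.1)))
  have haesm : AEStronglyMeasurable (fun t => w t i) (volume.restrict (Set.Ioo 0 T)) :=
    hmu.aestronglyMeasurable.congr (by filter_upwards [heq] with t h using (h i).symm)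
  apply MemLp.of_bound haesm (lam * (2 * Cbound))
  filter_upwards [heq, huad.2, hubar.2, hminbdd, hmaxbdd] with t h1 h2 h3 h4 h5
  obtain ⟨hu1, hu2⟩ := h2 i
  obtain ⟨hb1, hb2⟩ := h3 i
  obtain ⟨hm1, hm2⟩ := abs_le.mp (h4 i)
  obtain ⟨hM1, hM2⟩ := abs_le.mp (h5 i)
  rw [Real.norm_eq_abs, h1 i, abs_mul, abs_of_pos hlam]
  have habs : |u t i - ubar t i| ≤ 2 * Cbound := abs_le.2 ⟨by linarith, by linarith⟩
  exact mul_le_mul_of_nonneg_left habs hlam.le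

end helpers2
/-- properties of the truncations `v_k` of a critical direction `v`, and
the identity `C(ū) = cl_{L²} D(ū)`. -/
theorem stmt_12 (n : ℕ) (T : ℝ) (hT : 0 < T)
    (umin umax : ℝ → Fin n → ℝ)
    (hminmeas : Measurable umin) (hmaxmeas : Measurable umax)
    (Cbound : ℝ)
    (hminbdd : ∀ᵐ t ∂(volume.restrict (Set.Ioo 0 T)), ∀ i, |umin t i| ≤ Cbound)
    (hmaxbdd : ∀ᵐ t ∂(volume.restrict (Set.Ioo 0 T)), ∀ i, |umax t i| ≤ Cbound)
    (hminmax : ∀ᵐ t ∂(volume.restrict (Set.Ioo 0 T)), ∀ i, umin t i ≤ umax t i)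
    (Φ ubar : ℝ → Fin n → ℝ)
    (hΦmeas : Measurable Φ)
    (hΦL2 : ∀ i, MemLp (fun t => Φ t i) 2 (volume.restrict (Set.Ioo 0 T)))
    (hubar : Uad n T umin umax ubar)
    -- first order sign conditions for `(ū, Φ)`
    (hsign : ∀ᵐ t ∂(volume.restrict (Set.Ioo 0 T)), ∀ i,
        (0 < Φ t i → ubar t i = umin t i) ∧ (Φ t i < 0 → ubar t i = umax t i))
    -- `v` is a critical direction (pointwise description of `C(ū)`)
    (v : ℝ → Fin n → ℝ) (hvmeas : Measurable v)
    (hvL2 : ∀ i, MemLp (fun t => v t i) 2 (volume.restrict (Set.Ioo 0 T)))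
    (hvcrit : ∀ᵐ t ∂(volume.restrict (Set.Ioo 0 T)), ∀ i,
        (ubar t i = umin t i → 0 ≤ v t i) ∧
        (ubar t i = umax t i → v t i ≤ 0) ∧
        (Φ t i ≠ 0 → v t i = 0)) :
    -- (i) `ū + k⁻² v_k ∈ U_ad`
    (∀ k : ℕ, 1 ≤ k →
      Uad n T umin umax
        (fun t i => ubar t i + ((k : ℝ) ^ 2)⁻¹ * trunc n umin umax ubar v k t i)) ∧
    -- (ii) `v_k → v` strongly in `L²(0,T;ℝⁿ)`
    Tendsto (fun k : ℕ =>
        ∫ t in Set.Ioo 0 T, ∑ i, (trunc n umin umax ubar v k t i - v t i) ^ 2)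
      atTop (nhds 0) ∧
    -- (iii) `|v_{k,i}| ≤ |v_i|` a.e., and the orthogonality is inherited
    (∀ k : ℕ, 1 ≤ k →
      (∀ᵐ t ∂(volume.restrict (Set.Ioo 0 T)),
          ∀ i, |trunc n umin umax ubar v k t i| ≤ |v t i|) ∧
      ((∑ i, ∫ t in Set.Ioo 0 T, |Φ t i * v t i|) = 0 →
        ∑ i, ∫ t in Set.Ioo 0 T, Φ t i * trunc n umin umax ubar v k t i = 0)) ∧
    -- in particular: `C(ū)` is the `L²`-closure of `D(ū)`
    (∀ v' : ℝ → Fin n → ℝ, Measurable v' →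
      (∀ i, MemLp (fun t => v' t i) 2 (volume.restrict (Set.Ioo 0 T))) →
      (critCone n T umin umax ubar Φ v' ↔ inClosureD n T umin umax ubar Φ v')) := by

  haveI := restrict_finite T
  have hsigns : ∀ᵐ t ∂(volume.restrict (Set.Ioo 0 T)), ∀ i,
      (ubar t i = umin t i → 0 ≤ v t i) ∧ (ubar t i = umax t i → v t i ≤ 0) :=
    hvcrit.mono fun t h i => ⟨(h i).1, (h i).2.1⟩
  refine ⟨fun k hk => trunc_uad n T hminmeas hmaxmeas hvmeas hubar hsigns k hk,
    trunc_tendsto n T hminmeas hmaxmeas hubar.1 hvmeas hvL2,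
    fun k _hk => ⟨Eventually.of_forall fun t i => trunc_abs_le n umin umax ubar v k t i,
      fun H => ?_⟩, fun v' hv'meas hv'L2 => ⟨?_, ?_⟩⟩
  -- (iii) orthogonality
  · have hΦv0 : ∀ᵐ t ∂(volume.restrict (Set.Ioo 0 T)), ∀ i, Φ t i * v t i = 0 := by
      rw [ae_all_iff]
      intro i
      have hnn : ∀ j ∈ Finset.univ, (0:ℝ) ≤ ∫ t in Set.Ioo 0 T, |Φ t j * v t j| :=
        fun j _ => integral_nonneg fun t => abs_nonneg _
      have hzero := (Finset.sum_eq_zero_iff_of_nonneg hnn).mp H i (Finset.mem_univ i)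
      have hint : Integrable (fun t => |Φ t i * v t i|) (volume.restrict (Set.Ioo 0 T)) :=
        (memL2_mul_integrable (hΦL2 i) (hvL2 i)).abs
      have hae := (integral_eq_zero_iff_of_nonneg_ae
        (Eventually.of_forall fun t => abs_nonneg _) hint).mp hzero
      filter_upwards [hae] with t ht using abs_eq_zero.mp (by simpa using ht)
    exact trunc_orth n T umin umax ubar v Φ k hΦv0
  -- forward direction: critCone → inClosureD
  · intro hcrit
    obtain ⟨⟨wk, hwkS, hwklim⟩, hsum0⟩ := hcrit
    have hwkL2 : ∀ k i, MemLp (fun t => wk k t i) 2 (volume.restrict (Set.Ioo 0 T)) :=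
      fun k i => feas_memL2 n T Cbound hminbdd hmaxbdd hubar (hwkS k) i
    have hEint : ∀ k, Integrable (fun t => ∑ i, (wk k t i - v' t i) ^ 2)
        (volume.restrict (Set.Ioo 0 T)) :=
      fun k => integrable_finset_sum _ fun i _ => ((hwkL2 k i).sub (hv'L2 i)).integrable_sq
    choose lam hlam u hu heq using hwkS
    have claim1 : ∀ i, ∀ᵐ t ∂(volume.restrict (Set.Ioo 0 T)),
        ubar t i = umin t i → 0 ≤ v' t i := by
      intro i
      set g : ℝ → ℝ := fun t => if ubar t i = umin t i then min (v' t i) 0 else 0 with hg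
      have hgmeas : Measurable g :=
        Measurable.ite (measurableSet_eq_fun ((measurable_pi_apply i).comp hubar.1)
            ((measurable_pi_apply i).comp hminmeas))
          (((measurable_pi_apply i).comp hv'meas).min measurable_const) measurable_const
      have hgsq_le : ∀ t, g t ^ 2 ≤ (v' t i) ^ 2 := by
        intro t
        by_cases hc : ubar t i = umin t i
        · simp only [hg, if_pos hc]
          rcases le_total (v' t i) 0 with h | h
          · rw [min_eq_left h]
          · rw [min_eq_right h]
            simpa using sq_nonneg (v' t i)
        · simp only [hg, if_neg hc]
          simpa using sq_nonneg (v' t i)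
      have hg2int : Integrable (fun t => g t ^ 2) (volume.restrict (Set.Ioo 0 T)) :=
        (hv'L2 i).integrable_sq.mono' ((hgmeas.pow_const 2).aestronglyMeasurable)
          (Eventually.of_forall fun t => by
            rw [Real.norm_eq_abs, abs_of_nonneg (sq_nonneg _)]; exact hgsq_le t)
      have key : ∀ k, (∫ t in Set.Ioo 0 T, g t ^ 2) ≤
          ∫ t in Set.Ioo 0 T, ∑ i, (wk k t i - v' t i) ^ 2 := by
        intro k
        refine integral_mono_ae hg2int (hEint k) ?_
        filter_upwards [heq k, (hu k).2] with t h1 h2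
        have hsingle : g t ^ 2 ≤ (wk k t i - v' t i) ^ 2 := by
          by_cases hc : ubar t i = umin t i
          · have hwpos : 0 ≤ wk k t i := by
              rw [h1 i]
              refine mul_nonneg (hlam k).le (sub_nonneg.2 ?_)
              rw [hc]
              exact (h2 i).1
            simp only [hg, if_pos hc]
            rcases le_or_gt 0 (v' t i) with h | h
            · rw [min_eq_right h]
              simpa using sq_nonneg (wk k t i - v' t i)
            · rw [min_eq_left h.le]
              nlinarith
          · simp only [hg, if_neg hc]
            simpa using sq_nonneg (wk k t i - v' t i)
        exact hsingle.trans (Finset.single_le_sum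
          (f := fun j => (wk k t j - v' t j) ^ 2) (fun j _ => sq_nonneg _) (Finset.mem_univ i))
      have h0 : (∫ t in Set.Ioo 0 T, g t ^ 2) = 0 :=
        le_antisymm (ge_of_tendsto' hwklim key) (integral_nonneg fun t => sq_nonneg _)
      have hae := (integral_eq_zero_iff_of_nonneg_ae
        (Eventually.of_forall fun t => sq_nonneg _) hg2int).mp h0
      filter_upwards [hae] with t ht hc
      have hgt : g t = 0 := by
        have h2 : g t ^ 2 = 0 := by simpa using ht
        exact pow_eq_zero_iff two_ne_zero |>.mp h2
      simp only [hg, if_pos hc] at hgt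
      exact min_eq_right_iff.mp hgt
    have claim2 : ∀ i, ∀ᵐ t ∂(volume.restrict (Set.Ioo 0 T)),
        ubar t i = umax t i → v' t i ≤ 0 := by
      intro i
      set g : ℝ → ℝ := fun t => if ubar t i = umax t i then max (v' t i) 0 else 0 with hg
      have hgmeas : Measurable g :=
        Measurable.ite (measurableSet_eq_fun ((measurable_pi_apply i).comp hubar.1)
            ((measurable_pi_apply i).comp hmaxmeas))
          (((measurable_pi_apply i).comp hv'meas).max measurable_const) measurable_const
      have hgsq_le : ∀ t, g t ^ 2 ≤ (v' t i) ^ 2 := by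
        intro t
        by_cases hc : ubar t i = umax t i
        · simp only [hg, if_pos hc]
          rcases le_total (v' t i) 0 with h | h
          · rw [max_eq_right h]
            simpa using sq_nonneg (v' t i)
          · rw [max_eq_left h]
        · simp only [hg, if_neg hc]
          simpa using sq_nonneg (v' t i)
      have hg2int : Integrable (fun t => g t ^ 2) (volume.restrict (Set.Ioo 0 T)) :=
        (hv'L2 i).integrable_sq.mono' ((hgmeas.pow_const 2).aestronglyMeasurable)
          (Eventually.of_forall fun t => by
            rw [Real.norm_eq_abs, abs_of_nonneg (sq_nonneg _)]; exact hgsq_le t)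
      have key : ∀ k, (∫ t in Set.Ioo 0 T, g t ^ 2) ≤
          ∫ t in Set.Ioo 0 T, ∑ i, (wk k t i - v' t i) ^ 2 := by
        intro k
        refine integral_mono_ae hg2int (hEint k) ?_
        filter_upwards [heq k, (hu k).2] with t h1 h2
        have hsingle : g t ^ 2 ≤ (wk k t i - v' t i) ^ 2 := by
          by_cases hc : ubar t i = umax t i
          · have hwneg : wk k t i ≤ 0 := by
              rw [h1 i]
              refine mul_nonpos_of_nonneg_of_nonpos (hlam k).le (sub_nonpos.2 ?_)
              rw [hc]
              exact (h2 i).2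
            simp only [hg, if_pos hc]
            rcases le_or_gt (v' t i) 0 with h | h
            · rw [max_eq_right h]
              simpa using sq_nonneg (wk k t i - v' t i)
            · rw [max_eq_left h.le]
              nlinarith
          · simp only [hg, if_neg hc]
            simpa using sq_nonneg (wk k t i - v' t i)
        exact hsingle.trans (Finset.single_le_sum
          (f := fun j => (wk k t j - v' t j) ^ 2) (fun j _ => sq_nonneg _) (Finset.mem_univ i))
      have h0 : (∫ t in Set.Ioo 0 T, g t ^ 2) = 0 :=
        le_antisymm (ge_of_tendsto' hwklim key) (integral_nonneg fun t => sq_nonneg _)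
      have hae := (integral_eq_zero_iff_of_nonneg_ae
        (Eventually.of_forall fun t => sq_nonneg _) hg2int).mp h0
      filter_upwards [hae] with t ht hc
      have hgt : g t = 0 := by
        have h2 : g t ^ 2 = 0 := by simpa using ht
        exact pow_eq_zero_iff two_ne_zero |>.mp h2
      simp only [hg, if_pos hc] at hgt
      exact max_eq_right_iff.mp hgt
    have hnn : ∀ i, ∀ᵐ t ∂(volume.restrict (Set.Ioo 0 T)), 0 ≤ Φ t i * v' t i := by
      intro i
      filter_upwards [claim1 i, claim2 i, hsign] with t h1 h2 h3
      rcases lt_trichotomy (Φ t i) 0 with h | h | h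
      · have hv0 := h2 ((h3 i).2 h)
        nlinarith
      · rw [h, zero_mul]
      · exact mul_nonneg h.le (h1 ((h3 i).1 h))
    have heach : ∀ i, (∫ t in Set.Ioo 0 T, Φ t i * v' t i) = 0 := by
      have := (Finset.sum_eq_zero_iff_of_nonneg
        (fun i _ => integral_nonneg_of_ae (hnn i))).mp hsum0
      exact fun i => this i (Finset.mem_univ i)
    have claim3 : ∀ i, ∀ᵐ t ∂(volume.restrict (Set.Ioo 0 T)), Φ t i * v' t i = 0 := by
      intro i
      have hae := (integral_eq_zero_iff_of_nonneg_ae (hnn i)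
        (memL2_mul_integrable (hΦL2 i) (hv'L2 i))).mp (heach i)
      filter_upwards [hae] with t ht using by simpa using ht
    have hsigns' : ∀ᵐ t ∂(volume.restrict (Set.Ioo 0 T)), ∀ i,
        (ubar t i = umin t i → 0 ≤ v' t i) ∧ (ubar t i = umax t i → v' t i ≤ 0) := by
      rw [ae_all_iff]
      intro i
      filter_upwards [claim1 i, claim2 i] with t h1 h2
      exact ⟨h1, h2⟩
    have hΦv'0 : ∀ᵐ t ∂(volume.restrict (Set.Ioo 0 T)), ∀ i, Φ t i * v' t i = 0 :=
      ae_all_iff.2 claim3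
    refine ⟨fun k => trunc n umin umax ubar v' (k + 1), fun k => ⟨⟨(((k + 1 : ℕ) : ℝ)) ^ 2,
      by positivity,
      fun t i => ubar t i + (((k + 1 : ℕ) : ℝ) ^ 2)⁻¹ * trunc n umin umax ubar v' (k + 1) t i,
      trunc_uad n T hminmeas hmaxmeas hv'meas hubar hsigns' (k + 1) (Nat.le_add_left 1 k),
      Eventually.of_forall fun t i => ?_⟩,
      trunc_orth n T umin umax ubar v' Φ (k + 1) hΦv'0⟩,
      (trunc_tendsto n T hminmeas hmaxmeas hubar.1 hv'meas hv'L2).comp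
        (tendsto_add_atTop_nat 1)⟩
    have hne : (((k + 1 : ℕ) : ℝ)) ^ 2 ≠ 0 := by positivity
    rw [add_sub_cancel_left, ← mul_assoc, mul_inv_cancel₀ hne, one_mul]
  -- backward direction: inClosureD → critCone
  · intro h
    obtain ⟨vk, hvkD, hlim⟩ := h
    refine ⟨⟨vk, fun k => (hvkD k).1, hlim⟩, ?_⟩
    have hvkL2 : ∀ k i, MemLp (fun t => vk k t i) 2 (volume.restrict (Set.Ioo 0 T)) :=
      fun k i => feas_memL2 n T Cbound hminbdd hmaxbdd hubar (hvkD k).1 i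
    have hint1 : ∀ k i, Integrable (fun t => Φ t i * vk k t i)
        (volume.restrict (Set.Ioo 0 T)) :=
      fun k i => memL2_mul_integrable (hΦL2 i) (hvkL2 k i)
    have hint2 : ∀ i, Integrable (fun t => Φ t i * v' t i)
        (volume.restrict (Set.Ioo 0 T)) :=
      fun i => memL2_mul_integrable (hΦL2 i) (hv'L2 i)
    have hintsub : ∀ k i, Integrable (fun t => Φ t i * (vk k t i - v' t i))
        (volume.restrict (Set.Ioo 0 T)) :=
      fun k i => memL2_mul_integrable (hΦL2 i) ((hvkL2 k i).sub (hv'L2 i))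
    have hsqint : ∀ k i, Integrable (fun t => (vk k t i - v' t i) ^ 2)
        (volume.restrict (Set.Ioo 0 T)) :=
      fun k i => ((hvkL2 k i).sub (hv'L2 i)).integrable_sq
    set S' := ∑ i, ∫ t in Set.Ioo 0 T, Φ t i * v' t i with hS'
    have hDval : ∀ k, (∑ i, ∫ t in Set.Ioo 0 T, Φ t i * (vk k t i - v' t i)) = -S' := by
      intro k
      have e1 : ∀ i, (∫ t in Set.Ioo 0 T, Φ t i * (vk k t i - v' t i)) =
          (∫ t in Set.Ioo 0 T, Φ t i * vk k t i) - ∫ t in Set.Ioo 0 T, Φ t i * v' t i := by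
        intro i
        rw [← integral_sub (hint1 k i) (hint2 i)]
        congr 1
        funext t
        ring
      rw [Finset.sum_congr rfl fun i _ => e1 i, Finset.sum_sub_distrib, (hvkD k).2, zero_sub]
    set A := ∑ i, ∫ t in Set.Ioo 0 T, (Φ t i) ^ 2 with hA
    have hA0 : 0 ≤ A := Finset.sum_nonneg fun i _ => integral_nonneg fun t => sq_nonneg _
    have hDlim : Tendsto (fun k => ∑ i, ∫ t in Set.Ioo 0 T, Φ t i * (vk k t i - v' t i))
        atTop (nhds 0) := by
      rw [Metric.tendsto_atTop]
      intro ε hε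
      set δ := ε / (2 * (A + 1)) with hδdef
      have hδ : 0 < δ := div_pos hε (by linarith)
      have hbound : ∀ k, |∑ i, ∫ t in Set.Ioo 0 T, Φ t i * (vk k t i - v' t i)| ≤
          δ * A + (1 / (4 * δ)) * ∫ t in Set.Ioo 0 T, ∑ i, (vk k t i - v' t i) ^ 2 := by
        intro k
        have hstep3 : ∀ i, (∫ t in Set.Ioo 0 T, |Φ t i * (vk k t i - v' t i)|) ≤
            δ * (∫ t in Set.Ioo 0 T, (Φ t i) ^ 2) +
              (1 / (4 * δ)) * ∫ t in Set.Ioo 0 T, (vk k t i - v' t i) ^ 2 := by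
          intro i
          have hmono := integral_mono ((hintsub k i).abs)
            (((((hΦL2 i).integrable_sq).const_mul δ)).add
              ((hsqint k i).const_mul (1 / (4 * δ))))
            (fun t => by
              have h1 := abs_mul_le_sq' (Φ t i) (vk k t i - v' t i) δ hδ
              have h2 : (vk k t i - v' t i) ^ 2 / (4 * δ) =
                  1 / (4 * δ) * (vk k t i - v' t i) ^ 2 := by ring
              simp only [Pi.add_apply]
              linarith)
          simp only [Pi.add_apply] at hmono
          rw [integral_add (((hΦL2 i).integrable_sq).const_mul δ)
            ((hsqint k i).const_mul (1 / (4 * δ))), integral_const_mul, integral_const_mul] at hmono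
          exact hmono
        have hswap : (∑ i, ∫ t in Set.Ioo 0 T, (vk k t i - v' t i) ^ 2) =
            ∫ t in Set.Ioo 0 T, ∑ i, (vk k t i - v' t i) ^ 2 :=
          (integral_finset_sum _ fun i _ => hsqint k i).symm
        calc |∑ i, ∫ t in Set.Ioo 0 T, Φ t i * (vk k t i - v' t i)|
            ≤ ∑ i, |∫ t in Set.Ioo 0 T, Φ t i * (vk k t i - v' t i)| :=
              Finset.abs_sum_le_sum_abs _ _
          _ ≤ ∑ i, ∫ t in Set.Ioo 0 T, |Φ t i * (vk k t i - v' t i)| :=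
              Finset.sum_le_sum fun i _ => by
                have hni := norm_integral_le_integral_norm
                  (μ := volume.restrict (Set.Ioo 0 T)) (fun t => Φ t i * (vk k t i - v' t i))
                simp only [Real.norm_eq_abs] at hni
                exact hni
          _ ≤ ∑ i, (δ * (∫ t in Set.Ioo 0 T, (Φ t i) ^ 2) +
                (1 / (4 * δ)) * ∫ t in Set.Ioo 0 T, (vk k t i - v' t i) ^ 2) :=
              Finset.sum_le_sum fun i _ => hstep3 i
          _ = δ * A + (1 / (4 * δ)) *
                ∑ i, ∫ t in Set.Ioo 0 T, (vk k t i - v' t i) ^ 2 := by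
              rw [Finset.sum_add_distrib, ← Finset.mul_sum, ← Finset.mul_sum, hA]
          _ = δ * A + (1 / (4 * δ)) *
                ∫ t in Set.Ioo 0 T, ∑ i, (vk k t i - v' t i) ^ 2 := by rw [hswap]
      have hδA : δ * A < ε / 2 := by
        rw [hδdef, div_mul_eq_mul_div, div_lt_div_iff₀ (by linarith) two_pos]
        nlinarith
      have hev : ∀ᶠ k in atTop,
          (∫ t in Set.Ioo 0 T, ∑ i, (vk k t i - v' t i) ^ 2) < 2 * δ * ε :=
        hlim.eventually_lt_const (by positivity)
      obtain ⟨N, hN⟩ := eventually_atTop.mp hev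
      refine ⟨N, fun k hk => ?_⟩
      rw [Real.dist_eq, sub_zero]
      have h1 := hbound k
      have h2 := hN k hk
      have h3 : (1 / (4 * δ)) * (∫ t in Set.Ioo 0 T, ∑ i, (vk k t i - v' t i) ^ 2) < ε / 2 := by
        have hc : (0:ℝ) < 1 / (4 * δ) := by positivity
        calc (1 / (4 * δ)) * (∫ t in Set.Ioo 0 T, ∑ i, (vk k t i - v' t i) ^ 2)
            < (1 / (4 * δ)) * (2 * δ * ε) := by exact mul_lt_mul_of_pos_left h2 hc
          _ = ε / 2 := by field_simp; ring
      exact lt_of_le_of_lt h1 (by linarith)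
    have hconst : Tendsto (fun _ : ℕ => -S') atTop (nhds 0) := Tendsto.congr hDval hDlim
    have hfin : -S' = 0 := tendsto_nhds_unique tendsto_const_nhds hconst
    linarith
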